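/- Let a ≥ 0 and c > 0 be real numbers and m a natural number. The function f(t) = exp(−a·t)·(1 − exp(−c·t))^m is log-concave on (0, ∞): for all t₁, t₂ > 0 and all λ ∈ [0,1], f(λ·t₁ + (1−λ)·t₂) ≥ f(t₁)^λ · f(t₂)^{1−λ}. -/
import Mathlib


/-- The function `t ↦ exp(-a t)(1 - exp(-c t))^m` is log-concave on `(0,∞)`. -/
theorem log_concave_expected_degree (a c : ℝ) (ha : 0 ≤ a) (hc : 0 < c) (m : ℕ)
    (t₁ t₂ l : ℝ) (ht₁ : 0 < t₁) (ht₂ : 0 < t₂) (hl : l ∈ Set.Icc (0 : ℝ) 1) :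
    Real.exp (-a * (l * t₁ + (1 - l) * t₂)) *
        (1 - Real.exp (-c * (l * t₁ + (1 - l) * t₂))) ^ m ≥
      (Real.exp (-a * t₁) * (1 - Real.exp (-c * t₁)) ^ m) ^ l *
        (Real.exp (-a * t₂) * (1 - Real.exp (-c * t₂)) ^ m) ^ (1 - l) := by
  obtain ⟨hl0, hl1⟩ := hl
  have hl1' : 0 ≤ 1 - l := by linarith
  set B₁ : ℝ := 1 - Real.exp (-c * t₁) with hB₁
  set B₂ : ℝ := 1 - Real.exp (-c * t₂) with hB₂
  have hB₁0 : 0 ≤ B₁ := by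
    have : Real.exp (-c * t₁) < 1 := by
      rw [Real.exp_lt_one_iff]; nlinarith
    linarith
  have hB₂0 : 0 ≤ B₂ := by
    have : Real.exp (-c * t₂) < 1 := by
      rw [Real.exp_lt_one_iff]; nlinarith
    linarith
  -- exponential part splits exactly
  have hE : Real.exp (-a * (l * t₁ + (1 - l) * t₂)) =
      Real.exp (-a * t₁) ^ l * Real.exp (-a * t₂) ^ (1 - l) := by
    rw [← Real.exp_mul, ← Real.exp_mul, ← Real.exp_add]
    ring_nf
  -- key: 1 - exp(-c t) is concave, then AM-GM
  have hkey : B₁ ^ l * B₂ ^ (1 - l) ≤ 1 - Real.exp (-c * (l * t₁ + (1 - l) * t₂)) := by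
    have hconv : Real.exp (l * (-c * t₁) + (1 - l) * (-c * t₂)) ≤
        l * Real.exp (-c * t₁) + (1 - l) * Real.exp (-c * t₂) :=
      convexOn_exp.2 (Set.mem_univ _) (Set.mem_univ _) hl0 hl1' (by ring)
    have hAMGM : B₁ ^ l * B₂ ^ (1 - l) ≤ l * B₁ + (1 - l) * B₂ :=
      Real.geom_mean_le_arith_mean2_weighted hl0 hl1' hB₁0 hB₂0 (by ring)
    have harg : -c * (l * t₁ + (1 - l) * t₂) = l * (-c * t₁) + (1 - l) * (-c * t₂) := by
      ring
    rw [harg]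
    calc B₁ ^ l * B₂ ^ (1 - l) ≤ l * B₁ + (1 - l) * B₂ := hAMGM
      _ ≤ 1 - Real.exp (l * (-c * t₁) + (1 - l) * (-c * t₂)) := by
          simp only [hB₁, hB₂]; nlinarith
  -- raise to m
  have hpow : (B₁ ^ m) ^ l * (B₂ ^ m) ^ (1 - l) ≤
      (1 - Real.exp (-c * (l * t₁ + (1 - l) * t₂))) ^ m := by
    have h1 : (B₁ ^ m : ℝ) ^ l * (B₂ ^ m) ^ (1 - l) = (B₁ ^ l * B₂ ^ (1 - l)) ^ m := by
      rw [← Real.rpow_natCast B₁ m, ← Real.rpow_natCast B₂ m,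
        ← Real.rpow_mul hB₁0, ← Real.rpow_mul hB₂0, mul_comm (m : ℝ) l,
        mul_comm (m : ℝ) (1 - l), Real.rpow_mul hB₁0, Real.rpow_mul hB₂0,
        Real.rpow_natCast, Real.rpow_natCast, ← mul_pow]
    rw [h1]
    exact pow_le_pow_left₀ (by positivity) hkey m
  calc (Real.exp (-a * t₁) * B₁ ^ m) ^ l * (Real.exp (-a * t₂) * B₂ ^ m) ^ (1 - l)
      = (Real.exp (-a * t₁) ^ l * Real.exp (-a * t₂) ^ (1 - l)) *
        ((B₁ ^ m) ^ l * (B₂ ^ m) ^ (1 - l)) := by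
        rw [Real.mul_rpow (Real.exp_pos _).le (by positivity),
          Real.mul_rpow (Real.exp_pos _).le (by positivity)]
        ring
    _ ≤ Real.exp (-a * (l * t₁ + (1 - l) * t₂)) *
        (1 - Real.exp (-c * (l * t₁ + (1 - l) * t₂))) ^ m := by
        rw [hE]
        exact mul_le_mul_of_nonneg_left hpow (by positivity)
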